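/- arXiv:1801.02772 — 4 statements merged into one kernel-verified Lean document; each statement's English description precedes it below -/
import Mathlib

section
/- Let k ≥ 3, let k' ≥ 0 and i ≥ 1 be integers with k' + i + 1 ≤ k (in the paper k' = k - r - 2 and 1 ≤ i ≤ r ≤ k - 2). Then the sum over all triples of nonnegative integers (e1, e2, e3) with e1 + e2 + e3 = k' of (-1)^{i+e1} * C(k, i+e1) equals (k'+i+1) * ((-1)^{k'+i} * C(k-1, k'+i) - (-1)^{i-1} * C(k-1, i-1)) + k * ((-1)^{k'+i-1} * C(k-2, k'+i-1) - (-1)^{i-2} * C(k-2, i-2)). -/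
/-- Signed binomial coefficient `(-1)^m * C(n, m)`, interpreted as `0` when `m < 0`
(following the convention `C(n, m) = 0` for `m < 0` or `m > n`). -/
def sbinom (n : ℕ) (m : ℤ) : ℤ :=
  if 0 ≤ m then (-1) ^ m.toNat * (n.choose m.toNat : ℤ) else 0


lemma sbinom_coe (n m : ℕ) : sbinom n (m : ℤ) = (-1) ^ m * (n.choose m : ℤ) := by
  simp [sbinom]

lemma alt_sum (c n : ℕ) :
    ∑ j ∈ Finset.range (n + 1), (-1 : ℤ) ^ j * ((c + 1).choose j : ℤ)
      = (-1) ^ n * (c.choose n : ℤ) := by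
  induction n with
  | zero => simp
  | succ n ih =>
    rw [Finset.sum_range_succ, ih, Nat.choose_succ_succ']
    push_cast
    ring

lemma succ_mul_choose (c j : ℕ) :
    ((j : ℤ) + 2) * ((c + 1).choose (j + 2) : ℤ) = ((c : ℤ) + 1) * (c.choose (j + 1) : ℤ) := by
  have h := Nat.add_one_mul_choose_eq c (j + 1)
  have h' : ((c + 1) * c.choose (j + 1) : ℤ) = ((c + 1).choose (j + 2) * (j + 2) : ℤ) := by
    exact_mod_cast congrArg (Nat.cast : ℕ → ℤ) h
  push_cast at h'
  linarith

lemma alt_sum' (c n : ℕ) (hc : 1 ≤ c) :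
    ∑ j ∈ Finset.range (n + 1), (-1 : ℤ) ^ j * (c.choose j : ℤ)
      = (-1) ^ n * ((c - 1).choose n : ℤ) := by
  obtain ⟨d, rfl⟩ : ∃ d, c = d + 1 := ⟨c - 1, by omega⟩
  simpa using alt_sum d n

lemma succ_mul_choose' (k j : ℕ) (hk : 1 ≤ k) :
    ((j : ℤ) + 2) * (k.choose (j + 2) : ℤ) = (k : ℤ) * ((k - 1).choose (j + 1) : ℤ) := by
  obtain ⟨c, rfl⟩ : ∃ c, k = c + 1 := ⟨k - 1, by omega⟩
  simpa using succ_mul_choose c j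

lemma pascal' (c n : ℕ) (hc : 1 ≤ c) :
    (c.choose (n + 1) : ℤ) = ((c - 1).choose n : ℤ) + ((c - 1).choose (n + 1) : ℤ) := by
  obtain ⟨d, rfl⟩ : ∃ d, c = d + 1 := ⟨c - 1, by omega⟩
  simp [Nat.choose_succ_succ']

lemma main_sum (k i0 : ℕ) (hk : 3 ≤ k) (E : ℤ)
    (hE : (-1 : ℤ) ^ (i0 + 1) * (k.choose (i0 + 1) : ℤ)
      = ((i0 : ℤ) + 2) * ((-1) ^ (i0 + 1) * ((k - 1).choose (i0 + 1) : ℤ)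
            - (-1) ^ i0 * ((k - 1).choose i0 : ℤ))
        + (k : ℤ) * ((-1) ^ i0 * ((k - 2).choose i0 : ℤ) - E)) :
    ∀ k', k' + i0 + 2 ≤ k →
      ∑ a ∈ Finset.range (k' + 1), ((k' + 1 - a : ℕ) : ℤ)
          * ((-1) ^ (i0 + 1 + a) * (k.choose (i0 + 1 + a) : ℤ))
        = ((k' : ℤ) + i0 + 2) * ((-1) ^ (k' + i0 + 1) * ((k - 1).choose (k' + i0 + 1) : ℤ)
              - (-1) ^ i0 * ((k - 1).choose i0 : ℤ))
          + (k : ℤ) * ((-1) ^ (k' + i0) * ((k - 2).choose (k' + i0) : ℤ) - E) := by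
  intro k'
  induction k' with
  | zero =>
    intro _
    simpa using hE
  | succ n ih =>
    intro hle
    have IH := ih (by omega)
    -- decompose the sum
    have hsum : ∑ a ∈ Finset.range (n + 1 + 1), ((n + 1 + 1 - a : ℕ) : ℤ)
          * ((-1) ^ (i0 + 1 + a) * (k.choose (i0 + 1 + a) : ℤ))
        = (∑ a ∈ Finset.range (n + 1 + 1), ((n + 1 - a : ℕ) : ℤ)
            * ((-1) ^ (i0 + 1 + a) * (k.choose (i0 + 1 + a) : ℤ)))
          + ∑ a ∈ Finset.range (n + 1 + 1), (-1 : ℤ) ^ (i0 + 1 + a) * (k.choose (i0 + 1 + a) : ℤ) := by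
      rw [← Finset.sum_add_distrib]
      refine Finset.sum_congr rfl fun a ha => ?_
      have ha' : a ≤ n + 1 := by simpa [Nat.lt_succ_iff] using Finset.mem_range.mp ha
      have h2 : (n + 1 + 1 - a : ℕ) = (n + 1 - a) + 1 := by omega
      rw [h2]
      push_cast
      ring
    have hlast : ∑ a ∈ Finset.range (n + 1 + 1), ((n + 1 - a : ℕ) : ℤ)
          * ((-1) ^ (i0 + 1 + a) * (k.choose (i0 + 1 + a) : ℤ))
        = ∑ a ∈ Finset.range (n + 1), ((n + 1 - a : ℕ) : ℤ)
            * ((-1) ^ (i0 + 1 + a) * (k.choose (i0 + 1 + a) : ℤ)) := by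
      rw [Finset.sum_range_succ]
      simp
    -- value of the flat sum
    have hshift := Finset.sum_range_add (fun j => (-1 : ℤ) ^ j * (k.choose j : ℤ)) (i0 + 1) (n + 2)
    have hfull := alt_sum' k (i0 + 1 + n + 1) (by omega)
    have hini := alt_sum' k i0 (by omega)
    have heq1 : i0 + 1 + n + 1 + 1 = i0 + 1 + (n + 2) := by omega
    rw [heq1] at hfull
    have hflat : ∑ a ∈ Finset.range (n + 2), (-1 : ℤ) ^ (i0 + 1 + a) * (k.choose (i0 + 1 + a) : ℤ)
        = (-1) ^ (i0 + 1 + n + 1) * ((k - 1).choose (i0 + 1 + n + 1) : ℤ)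
          - (-1) ^ i0 * ((k - 1).choose i0 : ℤ) := by
      rw [← hfull, hshift, hini]
      ring
    -- binomial facts
    have f1 := pascal' k (n + i0 + 1) (by omega)
    have f2 := pascal' (k - 1) (n + i0) (by omega)
    have f2' : (k - 1 : ℕ) - 1 = k - 2 := by omega
    rw [f2'] at f2
    have f3 := succ_mul_choose' k (n + i0) (by omega)
    -- normalize indices
    have e1 : i0 + 1 + n + 1 = n + i0 + 2 := by omega
    have e2 : n + 1 + i0 + 1 = n + i0 + 2 := by omega
    have e3 : n + 1 + i0 = n + i0 + 1 := by omega
    have e4 : n + i0 + 1 + 1 = n + i0 + 2 := by omega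
    rw [hsum, hlast, IH, hflat, e1, e2, e3]
    rw [e4] at f1
    push_cast at f3 ⊢
    linear_combination (-((-1 : ℤ) ^ (n + i0))) * f3
      + ((-1 : ℤ) ^ (n + i0)) * ((n : ℤ) + i0 + 2) * f1
      - ((-1 : ℤ) ^ (n + i0)) * (k : ℤ) * f2

lemma base_id (k i0 : ℕ) (hk : 3 ≤ k) :
    (-1 : ℤ) ^ (i0 + 1) * (k.choose (i0 + 1) : ℤ)
      = ((i0 : ℤ) + 2) * ((-1) ^ (i0 + 1) * ((k - 1).choose (i0 + 1) : ℤ)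
            - (-1) ^ i0 * ((k - 1).choose i0 : ℤ))
        + (k : ℤ) * ((-1) ^ i0 * ((k - 2).choose i0 : ℤ) - sbinom (k - 2) ((i0 : ℤ) - 1)) := by
  rcases i0 with _ | j
  · have hs : sbinom (k - 2) (((0 : ℕ) : ℤ) - 1) = 0 := by norm_num [sbinom]
    obtain ⟨c, rfl⟩ : ∃ c, k = c + 3 := ⟨k - 3, by omega⟩
    rw [hs]
    show (-1 : ℤ) ^ 1 * ((c + 3).choose 1 : ℤ) = _
    simp [Nat.choose_one_right]
    ring
  · have hs : sbinom (k - 2) ((j + 1 : ℕ) - 1 : ℤ) = (-1) ^ j * ((k - 2).choose j : ℤ) := by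
      have : ((j + 1 : ℕ) : ℤ) - 1 = ((j : ℕ) : ℤ) := by push_cast; ring
      rw [this, sbinom_coe]
    rw [hs]
    have f1 := pascal' k (j + 1) (by omega)
    have f2 := pascal' (k - 1) j (by omega)
    have f2' : (k - 1 : ℕ) - 1 = k - 2 := by omega
    rw [f2'] at f2
    have f3 := succ_mul_choose' k j (by omega)
    push_cast at f3 ⊢
    linear_combination ((-1 : ℤ) ^ j) * ((j : ℤ) + 3) * f1
      - ((-1 : ℤ) ^ j) * f3 - ((-1 : ℤ) ^ j) * (k : ℤ) * f2

lemma triple_reduce (k' : ℕ) (g : ℕ → ℤ) :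
    ∑ e ∈ (Finset.range (k' + 1) ×ˢ Finset.range (k' + 1) ×ˢ Finset.range (k' + 1)).filter
        (fun e => e.1 + e.2.1 + e.2.2 = k'), g e.1
      = ∑ a ∈ Finset.range (k' + 1), ((k' + 1 - a : ℕ) : ℤ) * g a := by
  rw [Finset.sum_filter, Finset.sum_product]
  refine Finset.sum_congr rfl fun a ha => ?_
  have ha' : a ≤ k' := by simpa [Nat.lt_succ_iff] using Finset.mem_range.mp ha
  rw [Finset.sum_product]
  have inner1 : ∀ b, (∑ c ∈ Finset.range (k' + 1), if a + b + c = k' then g a else 0)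
      = if a + b ≤ k' then g a else 0 := by
    intro b
    by_cases hb : a + b ≤ k'
    · rw [if_pos hb, Finset.sum_eq_single_of_mem (k' - (a + b))
        (Finset.mem_range.mpr (by omega))]
      · rw [if_pos (by omega)]
      · intro c _ hne
        rw [if_neg (by omega)]
    · rw [if_neg hb]
      exact Finset.sum_eq_zero fun c _ => if_neg (by omega)
  rw [Finset.sum_congr rfl fun b _ => inner1 b, Finset.sum_ite, Finset.sum_const,
    Finset.sum_const_zero, add_zero]
  have hcard : (Finset.range (k' + 1)).filter (fun b => a + b ≤ k') = Finset.range (k' + 1 - a) := by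
    ext b
    simp only [Finset.mem_filter, Finset.mem_range]
    omega
  rw [hcard, Finset.card_range]
  simp [nsmul_eq_mul]

theorem sum_signed_binom_triple (k k' i : ℕ) (hk : 3 ≤ k) (hi : 1 ≤ i)
    (h : k' + i + 1 ≤ k) :
    (∑ e ∈ (Finset.range (k' + 1) ×ˢ Finset.range (k' + 1) ×ˢ Finset.range (k' + 1)).filter
        (fun e => e.1 + e.2.1 + e.2.2 = k'),
      (-1 : ℤ) ^ (i + e.1) * (k.choose (i + e.1) : ℤ))
      = ((k' : ℤ) + i + 1) * (sbinom (k - 1) ((k' : ℤ) + i) - sbinom (k - 1) ((i : ℤ) - 1))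
        + (k : ℤ) * (sbinom (k - 2) ((k' : ℤ) + i - 1) - sbinom (k - 2) ((i : ℤ) - 2)) := by
  obtain ⟨i0, rfl⟩ : ∃ i0, i = i0 + 1 := ⟨i - 1, by omega⟩
  rw [triple_reduce k' (fun a => (-1 : ℤ) ^ (i0 + 1 + a) * (k.choose (i0 + 1 + a) : ℤ))]
  have hmain := main_sum k i0 hk (sbinom (k - 2) ((i0 : ℤ) - 1)) (base_id k i0 hk) k' (by omega)
  rw [hmain]
  have c1 : ((k' : ℤ)) + (i0 + 1 : ℕ) = ((k' + i0 + 1 : ℕ) : ℤ) := by push_cast; ring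
  have c2 : ((i0 + 1 : ℕ) : ℤ) - 1 = ((i0 : ℕ) : ℤ) := by push_cast; ring
  have c3 : ((k' + i0 + 1 : ℕ) : ℤ) - 1 = ((k' + i0 : ℕ) : ℤ) := by push_cast; ring
  have c4 : ((i0 + 1 : ℕ) : ℤ) - 2 = ((i0 : ℕ) : ℤ) - 1 := by push_cast; ring
  rw [c1, c2, c3, c4, sbinom_coe, sbinom_coe, sbinom_coe]
  push_cast
  ring
end

section
/- Let p be a prime, r ≥ 1, and let k_1, ..., k_r be positive integers with total sum K. Then, in F_p, the sum over all r-tuples p > m_1 > m_2 > ... > m_r ≥ 1 of the product of m_s^{-k_s} for s = 1, ..., r equals (-1)^K times the sum over all r-tuples p > m_1 > ... > m_r ≥ 1 of the product m_1^{-k_r} * m_2^{-k_{r-1}} * ... * m_r^{-k_1} (i.e., the same sum with the exponent sequence reversed). -/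
theorem finite_mzv_reversal (p r : ℕ) (hp : p.Prime) (hr : 1 ≤ r)
    (k : Fin r → ℕ) (hk : ∀ s, 1 ≤ k s) :
    (∑ m ∈ Finset.univ.filter
        (fun m : Fin r → Fin p =>
          (∀ s t : Fin r, s < t → (m t : ℕ) < (m s : ℕ)) ∧ ∀ s, 1 ≤ (m s : ℕ)),
      ∏ s, (((m s : ℕ) : ZMod p))⁻¹ ^ (k s))
      = (-1 : ZMod p) ^ (∑ s, k s) *
        ∑ m ∈ Finset.univ.filter
            (fun m : Fin r → Fin p =>
              (∀ s t : Fin r, s < t → (m t : ℕ) < (m s : ℕ)) ∧ ∀ s, 1 ≤ (m s : ℕ)),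
          ∏ s, (((m s : ℕ) : ZMod p))⁻¹ ^ (k s.rev) := by
  haveI : Fact p.Prime := ⟨hp⟩
  have hp1 : 1 < p := hp.one_lt
  set S := Finset.univ.filter
        (fun m : Fin r → Fin p =>
          (∀ s t : Fin r, s < t → (m t : ℕ) < (m s : ℕ)) ∧ ∀ s, 1 ≤ (m s : ℕ)) with hS
  have hmem : ∀ m : Fin r → Fin p, m ∈ S ↔
      ((∀ s t : Fin r, s < t → (m t : ℕ) < (m s : ℕ)) ∧ ∀ s, 1 ≤ (m s : ℕ)) := by
    intro m; simp [hS]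
  set σ : (Fin r → Fin p) → (Fin r → Fin p) :=
    fun m s => ⟨(p - (m s.rev : ℕ)) % p, Nat.mod_lt _ (by omega)⟩ with hσ
  have hσmem : ∀ m ∈ S, σ m ∈ S := by
    intro m hm
    rw [hmem] at hm ⊢
    obtain ⟨hdec, hpos⟩ := hm
    constructor
    · intro s t hst
      have h1 : t.rev < s.rev := Fin.rev_lt_rev.mpr hst
      have := hdec t.rev s.rev h1
      have h2 := (m t.rev).2
      have h3 := hpos s.rev
      have h4 := hpos t.rev
      simp only [hσ]
      rw [Nat.mod_eq_of_lt (by omega), Nat.mod_eq_of_lt (by omega)]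
      omega
    · intro s
      have h1 := (m s.rev).2
      have h2 := hpos s.rev
      simp only [hσ]
      rw [Nat.mod_eq_of_lt (by omega)]
      omega
  have hσσ : ∀ m, m ∈ S → σ (σ m) = m := by
    intro m hm
    funext s
    rw [hmem] at hm
    have hle := (m s).2
    have hpos := hm.2 s
    apply Fin.ext
    simp only [hσ]
    rw [Fin.rev_rev]
    rw [Nat.mod_eq_of_lt (show p - (m s : ℕ) < p by omega), Nat.mod_eq_of_lt (by omega)]
    omega
  have hsumrev : ∑ s : Fin r, k s.rev = ∑ s, k s :=
    Fintype.sum_equiv (Fin.revPerm) _ _ (fun s => by simp)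
  have key : ∀ m ∈ S,
      ∏ s, (((m s : ℕ) : ZMod p))⁻¹ ^ (k s)
        = (-1 : ZMod p) ^ (∑ s, k s) * ∏ s, (((σ m s : ℕ) : ZMod p))⁻¹ ^ (k s.rev) := by
    intro m hm
    rw [hmem] at hm
    have hcast : ∀ s : Fin r, (((σ m s : ℕ) : ZMod p)) = - ((m s.rev : ℕ) : ZMod p) := by
      intro s
      have h2 := (m s.rev).2
      have h3 := hm.2 s.rev
      simp only [hσ]
      rw [Nat.mod_eq_of_lt (by omega)]
      push_cast [Nat.cast_sub h2.le]
      simp [ZMod.natCast_self]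
    have step1 : ∏ s, (((σ m s : ℕ) : ZMod p))⁻¹ ^ (k s.rev)
        = ∏ s : Fin r, ((-1 : ZMod p) ^ (k s.rev) * (((m s.rev : ℕ) : ZMod p))⁻¹ ^ (k s.rev)) := by
      apply Finset.prod_congr rfl
      intro s _
      rw [hcast s, inv_neg, neg_pow]
    rw [step1, Finset.prod_mul_distrib, Finset.prod_pow_eq_pow_sum, hsumrev]
    have step2 : ∏ s : Fin r, (((m s.rev : ℕ) : ZMod p))⁻¹ ^ (k s.rev)
        = ∏ s : Fin r, (((m s : ℕ) : ZMod p))⁻¹ ^ (k s) :=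
      Fintype.prod_equiv (Fin.revPerm) _ _ (fun s => by simp)
    rw [step2, ← mul_assoc, ← pow_add, ← two_mul, pow_mul]
    simp
  have main : ∑ m ∈ S, ∏ s, (((m s : ℕ) : ZMod p))⁻¹ ^ (k s)
      = ∑ m ∈ S, (-1 : ZMod p) ^ (∑ s, k s) * ∏ s, (((m s : ℕ) : ZMod p))⁻¹ ^ (k s.rev) := by
    refine Finset.sum_nbij' σ σ hσmem hσmem hσσ hσσ ?_
    intro m hm
    exact key m hm
  rw [main, ← Finset.mul_sum]
end

section
/- Let p be a prime, r ≥ 1, and let k_1, ..., k_r be positive integers all satisfying k_s ≤ p - 2 with k_1 + ... + k_r ≤ p - 2. Then the sum over all permutations σ of {1, ..., r} of the mod-p harmonic sum ∑_{p > m_1 > ... > m_r ≥ 1} ∏_s m_s^{-k_{σ(s)}} equals 0 in F_p. -/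
open Finset

noncomputable def injS (p r : ℕ) : Finset (Fin r → Fin p) := by
  classical
  exact Finset.univ.filter (fun n => Function.Injective n ∧ ∀ s, 1 ≤ (n s : ℕ))

lemma mem_injS {p r : ℕ} {n : Fin r → Fin p} :
    n ∈ injS p r ↔ Function.Injective n ∧ ∀ s, 1 ≤ (n s : ℕ) := by
  classical
  simp [injS]

lemma single_sum_vanish {p : ℕ} [Fact p.Prime] {K : ℕ} (hK1 : 1 ≤ K) (hK2 : K ≤ p - 2) :
    ∑ m ∈ Finset.univ.filter (fun m : Fin p => 1 ≤ (m : ℕ)),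
      (((m : ℕ) : ZMod p))⁻¹ ^ K = 0 := by
  classical
  have hp : p.Prime := Fact.out
  have hp2 : 2 ≤ p := hp.two_le
  have hp3 : 3 ≤ p := by omega
  have h1 : ∑ m ∈ Finset.univ.filter (fun m : Fin p => 1 ≤ (m : ℕ)),
      (((m : ℕ) : ZMod p))⁻¹ ^ K = ∑ u : (ZMod p)ˣ, ((u : ZMod p))⁻¹ ^ K := by
    refine Finset.sum_bij' (i := fun (m : Fin p) (hm : m ∈ Finset.univ.filter
        (fun m : Fin p => 1 ≤ (m : ℕ))) => Units.mk0 ((m : ℕ) : ZMod p)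
        (by
          simp only [Finset.mem_filter] at hm
          intro h
          rw [ZMod.natCast_eq_zero_iff] at h
          have := Nat.le_of_dvd (by omega) h
          have := m.isLt
          omega))
      (j := fun u _ => (⟨(u : ZMod p).val, ZMod.val_lt _⟩ : Fin p))
      ?c1 ?c2 ?c3 ?c4 ?c5
    case c1 => intro a _; exact Finset.mem_univ _
    case c2 =>
      intro u _
      simp only [Finset.mem_filter, Finset.mem_univ, true_and]
      have : (u : ZMod p) ≠ 0 := Units.ne_zero u
      have := ZMod.val_pos.mpr this
      omega
    case c3 =>
      intro m hm
      apply Fin.ext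
      simp [ZMod.val_natCast_of_lt m.isLt]
    case c4 =>
      intro u _
      apply Units.ext
      simp [ZMod.natCast_val, ZMod.cast_id]
    case c5 =>
      intro m hm
      simp
  rw [h1]
  have h2 : ∑ u : (ZMod p)ˣ, ((u : ZMod p))⁻¹ ^ K = ∑ u : (ZMod p)ˣ, ((u : ZMod p)) ^ K := by
    rw [← Equiv.sum_comp (Equiv.inv (ZMod p)ˣ) (fun u => ((u : ZMod p)) ^ K)]
    apply Finset.sum_congr rfl
    intro u _
    rw [Equiv.inv_apply, ← Units.val_inv_eq_inv_val]
  rw [h2]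
  have := FiniteField.sum_pow_units (ZMod p) K
  rw [ZMod.card] at this
  rw [this, if_neg]
  intro hdvd
  have := Nat.le_of_dvd (by omega) hdvd
  omega

lemma injsum_vanish {p : ℕ} [Fact p.Prime] :
    ∀ (r : ℕ) (k : Fin r → ℕ), 1 ≤ r → (∀ s, 1 ≤ k s) → (∑ s, k s ≤ p - 2) →
      ∑ n ∈ injS p r, ∏ s, (((n s : ℕ) : ZMod p))⁻¹ ^ k s = 0 := by
  classical
  intro r
  induction r with
  | zero => intro k hr; exact absurd hr (by omega)
  | succ r ih =>
    intro k _ hk hsum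
    rcases Nat.eq_zero_or_pos r with h0 | hr
    · subst h0
      have hbij : ∑ n ∈ injS p 1, ∏ s, (((n s : ℕ) : ZMod p))⁻¹ ^ k s
          = ∑ m ∈ Finset.univ.filter (fun m : Fin p => 1 ≤ (m : ℕ)),
            (((m : ℕ) : ZMod p))⁻¹ ^ k 0 := by
        refine Finset.sum_bij' (i := fun n _ => n 0) (j := fun m _ => fun _ => m)
          ?c1 ?c2 ?c3 ?c4 ?c5
        case c1 =>
          intro n hn
          simp only [Finset.mem_filter, Finset.mem_univ, true_and]
          exact (mem_injS.mp hn).2 0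
        case c2 =>
          intro m hm
          refine mem_injS.mpr ⟨fun a b _ => Subsingleton.elim a b, fun s => ?_⟩
          simpa using (Finset.mem_filter.mp hm).2
        case c3 =>
          intro n hn
          funext s
          show n 0 = n s
          rw [Fin.fin_one_eq_zero s]
        case c4 => intro m hm; rfl
        case c5 =>
          intro n hn
          rw [Fin.prod_univ_one]
      rw [hbij]
      exact single_sum_vanish (hk 0) (by rwa [Fin.sum_univ_one] at hsum)
    · -- inductive step, r ≥ 1
      set K := k (Fin.last r) with hKdef
      set k' : Fin r → ℕ := fun s => k s.castSucc with hk'def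
      set M : Finset (Fin p) := Finset.univ.filter (fun m : Fin p => 1 ≤ (m : ℕ)) with hMdef
      set g : Fin p → ZMod p := fun m => (((m : ℕ) : ZMod p))⁻¹ ^ K with hgdef
      set F : (Fin r → Fin p) → ZMod p :=
        fun n => ∏ s, (((n s : ℕ) : ZMod p))⁻¹ ^ k' s with hFdef
      have hsum' : ∑ s : Fin (r + 1), k s = (∑ s : Fin r, k' s) + K :=
        Fin.sum_univ_castSucc k
      have hK1 : 1 ≤ K := hk _
      have hK2 : K ≤ p - 2 := by omega
      -- step 0
      have step0 : (0 : ZMod p) = ∑ n ∈ injS p r, ∑ m ∈ M, g m * F n := by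
        have hz : ∑ m ∈ M, g m = 0 := single_sum_vanish hK1 hK2
        calc (0 : ZMod p) = (∑ m ∈ M, g m) * (∑ n ∈ injS p r, F n) := by
              rw [hz, zero_mul]
          _ = ∑ m ∈ M, ∑ n ∈ injS p r, g m * F n := by rw [Finset.sum_mul_sum]
          _ = ∑ n ∈ injS p r, ∑ m ∈ M, g m * F n := Finset.sum_comm
      -- split each inner sum
      have split : ∀ n, ∑ m ∈ M, g m * F n
          = ∑ m ∈ M.filter (fun m => m ∈ Finset.image n Finset.univ), g m * F n
            + ∑ m ∈ M.filter (fun m => m ∉ Finset.image n Finset.univ), g m * F n :=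
        fun n => (Finset.sum_filter_add_sum_filter_not M _ _).symm
      -- collision part
      have hfilter_eq : ∀ n ∈ injS p r,
          M.filter (fun m => m ∈ Finset.image n Finset.univ) = Finset.image n Finset.univ := by
        intro n hn
        ext m
        constructor
        · intro h; exact (Finset.mem_filter.mp h).2
        · intro h
          refine Finset.mem_filter.mpr ⟨?_, h⟩
          obtain ⟨j, _, rfl⟩ := Finset.mem_image.mp h
          simp only [hMdef, Finset.mem_filter, Finset.mem_univ, true_and]
          exact (mem_injS.mp hn).2 j
      have hcoll : ∑ n ∈ injS p r,
          ∑ m ∈ M.filter (fun m => m ∈ Finset.image n Finset.univ), g m * F n = 0 := by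
        have h1 : ∀ n ∈ injS p r,
            ∑ m ∈ M.filter (fun m => m ∈ Finset.image n Finset.univ), g m * F n
            = ∑ j : Fin r, g (n j) * F n := by
          intro n hn
          rw [hfilter_eq n hn, Finset.sum_image]
          intro a _ b _ hab
          exact (mem_injS.mp hn).1 hab
        rw [Finset.sum_congr rfl h1, Finset.sum_comm]
        have h2 : ∀ j : Fin r, ∑ n ∈ injS p r, g (n j) * F n = 0 := by
          intro j
          have hterm : ∀ n ∈ injS p r, g (n j) * F n
              = ∏ s, (((n s : ℕ) : ZMod p))⁻¹ ^ (k' s + if s = j then K else 0) := by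
            intro n hn
            have : ∀ s, (((n s : ℕ) : ZMod p))⁻¹ ^ (k' s + if s = j then K else 0)
                = (((n s : ℕ) : ZMod p))⁻¹ ^ k' s *
                  (if s = j then (((n s : ℕ) : ZMod p))⁻¹ ^ K else 1) := by
              intro s
              rw [pow_add]
              congr 1
              split_ifs <;> simp
            rw [Finset.prod_congr rfl (fun s _ => this s), Finset.prod_mul_distrib,
              Finset.prod_ite_eq' Finset.univ j (fun s => (((n s : ℕ) : ZMod p))⁻¹ ^ K)]
            simp [hgdef, hFdef, mul_comm]
          rw [Finset.sum_congr rfl hterm]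
          apply ih (fun s => k' s + if s = j then K else 0) hr
          · intro s
            have := hk s.castSucc
            simp only [hk'def]
            omega
          · rw [Finset.sum_add_distrib, Finset.sum_ite_eq' Finset.univ j (fun _ => K)]
            simp only [Finset.mem_univ, if_true]
            omega
        rw [Finset.sum_congr rfl (fun j _ => h2 j), Finset.sum_const, smul_zero]
      -- non-collision part
      have hnoncoll : ∑ n ∈ injS p r,
          ∑ m ∈ M.filter (fun m => m ∉ Finset.image n Finset.univ), g m * F n
          = ∑ N ∈ injS p (r + 1), ∏ s, (((N s : ℕ) : ZMod p))⁻¹ ^ k s := by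
        rw [Finset.sum_sigma']
        refine Finset.sum_bij' (i := fun q _ => Fin.snoc q.1 q.2)
          (j := fun N _ => ⟨Fin.init N, N (Fin.last r)⟩) ?d1 ?d2 ?d3 ?d4 ?d5
        case d1 =>
          rintro ⟨n, m⟩ hq
          rw [Finset.mem_sigma] at hq
          obtain ⟨hn, hm⟩ := hq
          rw [mem_injS] at hn
          rw [Finset.mem_filter] at hm
          have hm1 : 1 ≤ (m : ℕ) := by
            have := hm.1
            simp only [hMdef, Finset.mem_filter, Finset.mem_univ, true_and] at this
            exact this
          have hmnotin : m ∉ Finset.image n Finset.univ := hm.2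
          refine mem_injS.mpr ⟨?_, ?_⟩
          · intro a b hab
            rcases Fin.eq_castSucc_or_eq_last a with ⟨a', rfl⟩ | rfl <;>
              rcases Fin.eq_castSucc_or_eq_last b with ⟨b', rfl⟩ | rfl
            · simp only [Fin.snoc_castSucc] at hab
              exact congrArg Fin.castSucc (hn.1 hab)
            · simp only [Fin.snoc_castSucc, Fin.snoc_last] at hab
              exact absurd (Finset.mem_image.mpr ⟨a', Finset.mem_univ _, hab⟩) hmnotin
            · simp only [Fin.snoc_castSucc, Fin.snoc_last] at hab
              exact absurd (Finset.mem_image.mpr ⟨b', Finset.mem_univ _, hab.symm⟩) hmnotin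
            · rfl
          · intro s
            rcases Fin.eq_castSucc_or_eq_last s with ⟨s', rfl⟩ | rfl
            · simpa [Fin.snoc_castSucc] using hn.2 s'
            · simpa [Fin.snoc_last] using hm1
        case d2 =>
          intro N hN
          rw [mem_injS] at hN
          rw [Finset.mem_sigma]
          constructor
          · refine mem_injS.mpr ⟨?_, fun s => hN.2 _⟩
            intro a b hab
            simp only [Fin.init] at hab
            exact Fin.castSucc_injective _ (hN.1 hab)
          · rw [Finset.mem_filter]
            refine ⟨?_, ?_⟩
            · simp only [hMdef, Finset.mem_filter, Finset.mem_univ, true_and]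
              exact hN.2 _
            · intro hmem
              obtain ⟨j, _, hj⟩ := Finset.mem_image.mp hmem
              have : Fin.castSucc j = Fin.last r := hN.1 hj
              exact absurd this (Fin.castSucc_lt_last j).ne
        case d3 =>
          rintro ⟨n, m⟩ hq
          simp [Fin.init_snoc, Fin.snoc_last]
        case d4 =>
          intro N hN
          exact Fin.snoc_init_self N
        case d5 =>
          rintro ⟨n, m⟩ hq
          rw [Fin.prod_univ_castSucc]
          simp only [Fin.snoc_castSucc, Fin.snoc_last]
          rw [mul_comm]
      -- assemble
      have final : (0 : ZMod p) = 0 +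
          ∑ N ∈ injS p (r + 1), ∏ s, (((N s : ℕ) : ZMod p))⁻¹ ^ k s := by
        calc (0 : ZMod p) = ∑ n ∈ injS p r, ∑ m ∈ M, g m * F n := step0
          _ = ∑ n ∈ injS p r,
              (∑ m ∈ M.filter (fun m => m ∈ Finset.image n Finset.univ), g m * F n
                + ∑ m ∈ M.filter (fun m => m ∉ Finset.image n Finset.univ), g m * F n) :=
            Finset.sum_congr rfl (fun n _ => split n)
          _ = (∑ n ∈ injS p r,
                ∑ m ∈ M.filter (fun m => m ∈ Finset.image n Finset.univ), g m * F n)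
              + ∑ n ∈ injS p r,
                ∑ m ∈ M.filter (fun m => m ∉ Finset.image n Finset.univ), g m * F n :=
            Finset.sum_add_distrib
          _ = 0 + ∑ N ∈ injS p (r + 1), ∏ s, (((N s : ℕ) : ZMod p))⁻¹ ^ k s := by
            rw [hcoll, hnoncoll]
      rw [zero_add] at final
      exact final.symm

/-- for an injective tuple `N`, the permutation making it strictly decreasing -/
noncomputable def sortPerm {p r : ℕ} (N : Fin r → Fin p) : Equiv.Perm (Fin r) :=
  (finCongr rfl).trans ((Fin.revPerm).trans (Tuple.sort N))

lemma sortPerm_strictAnti {p r : ℕ} {N : Fin r → Fin p} (hN : Function.Injective N) :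
    StrictAnti (N ∘ (sortPerm N)) := by
  have hmono : Monotone (N ∘ Tuple.sort N) := Tuple.monotone_sort N
  have hinj : Function.Injective (N ∘ Tuple.sort N) :=
    hN.comp (Tuple.sort N).injective
  have hsm : StrictMono (N ∘ Tuple.sort N) := hmono.strictMono_of_injective hinj
  intro a b hab
  have : Fin.rev b < Fin.rev a := Fin.rev_lt_rev.mpr hab
  have := hsm this
  simpa [sortPerm, Function.comp] using this

lemma decreasing_unique {p r : ℕ} {f g : Fin r → Fin p} (hf : StrictAnti f)
    (hg : StrictAnti g) (hrange : Set.range f = Set.range g) : f = g :=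
  StrictAnti.range_inj hf hg |>.mp hrange

theorem symmetric_sum_vanishing (p r : ℕ) (hp : p.Prime) (hr : 1 ≤ r)
    (k : Fin r → ℕ) (hk : ∀ s, 1 ≤ k s) (hk2 : ∀ s, k s ≤ p - 2)
    (hsum : ∑ s, k s ≤ p - 2) :
    (∑ σ : Equiv.Perm (Fin r),
      ∑ m ∈ Finset.univ.filter
          (fun m : Fin r → Fin p =>
            (∀ s t : Fin r, s < t → (m t : ℕ) < (m s : ℕ)) ∧ ∀ s, 1 ≤ (m s : ℕ)),
        ∏ s, (((m s : ℕ) : ZMod p))⁻¹ ^ (k (σ s))) = 0 := by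
  classical
  haveI : Fact p.Prime := ⟨hp⟩
  have key : (∑ σ : Equiv.Perm (Fin r),
      ∑ m ∈ Finset.univ.filter
          (fun m : Fin r → Fin p =>
            (∀ s t : Fin r, s < t → (m t : ℕ) < (m s : ℕ)) ∧ ∀ s, 1 ≤ (m s : ℕ)),
        ∏ s, (((m s : ℕ) : ZMod p))⁻¹ ^ (k (σ s)))
      = ∑ N ∈ injS p r, ∏ s, (((N s : ℕ) : ZMod p))⁻¹ ^ k s := by
    rw [← Finset.sum_product']
    refine Finset.sum_bij' (i := fun x _ => x.2 ∘ ⇑(x.1.symm))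
      (j := fun N _ => ((sortPerm N), N ∘ (sortPerm N))) ?d1 ?d2 ?d3 ?d4 ?d5
    case d1 =>
      rintro ⟨σ, m⟩ hx
      rw [Finset.mem_product, Finset.mem_filter] at hx
      obtain ⟨-, -, hdec, hge⟩ := hx
      have hanti : StrictAnti m := by
        intro a b hab
        exact hdec a b hab
      exact mem_injS.mpr ⟨hanti.injective.comp σ.symm.injective, fun s => hge _⟩
    case d2 =>
      intro N hN
      rw [mem_injS] at hN
      rw [Finset.mem_product, Finset.mem_filter]
      refine ⟨Finset.mem_univ _, Finset.mem_univ _, ?_, fun s => hN.2 _⟩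
      intro s t hst
      exact sortPerm_strictAnti hN.1 hst
    case d3 =>
      rintro ⟨σ, m⟩ hx
      rw [Finset.mem_product, Finset.mem_filter] at hx
      obtain ⟨-, -, hdec, hge⟩ := hx
      have hanti : StrictAnti m := fun a b hab => hdec a b hab
      set N : Fin r → Fin p := m ∘ ⇑σ.symm with hN
      have hNinj : Function.Injective N := hanti.injective.comp σ.symm.injective
      have h1 : StrictAnti (N ∘ (sortPerm N)) := sortPerm_strictAnti hNinj
      have h2 : StrictAnti (N ∘ σ) := by
        have : (N ∘ σ) = m := by
          funext s; simp [hN, Function.comp, Equiv.symm_apply_apply]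
        rw [this]; exact hanti
      have hrange : Set.range (N ∘ (sortPerm N)) = Set.range (N ∘ σ) := by
        rw [Set.range_comp, Set.range_comp]
        congr 1
        rw [(sortPerm N).range_eq_univ, σ.range_eq_univ]
      have heq : N ∘ (sortPerm N) = N ∘ σ := decreasing_unique h1 h2 hrange
      have hperm : (sortPerm N) = σ := by
        apply Equiv.ext
        intro s
        apply hNinj
        exact congrFun heq s
      have hm : N ∘ (sortPerm N) = m := by
        rw [heq]; funext s; simp [hN, Function.comp, Equiv.symm_apply_apply]
      exact Prod.ext hperm hm
    case d4 =>
      intro N hN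
      funext s
      simp [Function.comp, Equiv.apply_symm_apply]
    case d5 =>
      rintro ⟨σ, m⟩ hx
      show ∏ s, (((m s : ℕ) : ZMod p))⁻¹ ^ k (σ s)
          = ∏ s, ((((m (σ.symm s) : Fin p) : ℕ) : ZMod p))⁻¹ ^ k s
      rw [← Equiv.prod_comp σ (fun s => ((((m (σ.symm s) : Fin p) : ℕ) : ZMod p))⁻¹ ^ k s)]
      apply Finset.prod_congr rfl
      intro s _
      simp [Equiv.symm_apply_apply]
  rw [key]
  exact injsum_vanish r k hr hk hsum
end

section
/- Let p be a prime and let k, r be positive integers with kr ≤ p - 2. Then the nested sum over p > m_1 > m_2 > ... > m_r ≥ 1 of ∏_{s=1}^r m_s^{-k}, computed in F_p, equals 0. -/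
open Finset MvPolynomial

theorem finite_mzv_constant_vanishing (p k r : ℕ) (hp : p.Prime) (hk : 1 ≤ k)
    (hr : 1 ≤ r) (hkr : k * r ≤ p - 2) :
    (∑ m ∈ Finset.univ.filter
        (fun m : Fin r → Fin p =>
          (∀ s t : Fin r, s < t → (m t : ℕ) < (m s : ℕ)) ∧ ∀ s, 1 ≤ (m s : ℕ)),
      ∏ s, (((m s : ℕ) : ZMod p))⁻¹ ^ k) = 0 := by
  classical
  haveI : Fact p.Prime := ⟨hp⟩
  haveI : NeZero p := ⟨hp.pos.ne'⟩
  have hp2 : 2 ≤ p := hp.two_le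
  have hrkr : r ≤ k * r := Nat.le_mul_of_pos_left r hk
  have hrp : r < p := by omega
  set x : Fin p → ZMod p := fun i => (((i : ℕ) : ZMod p))⁻¹ ^ k with hxdef
  -- power sums vanish
  have hpsum : ∀ j, j ≤ r → eval x (psum (Fin p) (ZMod p) j) = 0 := by
    intro j hj
    have h1 : eval x (psum (Fin p) (ZMod p) j)
        = ∑ i : Fin p, (((i : ℕ) : ZMod p))⁻¹ ^ (k * j) := by
      simp [psum, hxdef, ← pow_mul]
    have hbij : Function.Bijective (fun i : Fin p => ((i : ℕ) : ZMod p)) := by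
      rw [Fintype.bijective_iff_injective_and_card]
      refine ⟨fun i j hij => Fin.ext ?_, by simp [ZMod.card]⟩
      have h := congrArg ZMod.val hij
      simpa only [ZMod.val_cast_of_lt i.isLt, ZMod.val_cast_of_lt j.isLt] using h
    have h2 : ∑ i : Fin p, (((i : ℕ) : ZMod p))⁻¹ ^ (k * j)
        = ∑ a : ZMod p, a⁻¹ ^ (k * j) :=
      Fintype.sum_bijective _ hbij _ _ (fun i => rfl)
    have h3 : ∑ a : ZMod p, a⁻¹ ^ (k * j) = ∑ a : ZMod p, a ^ (k * j) :=
      Fintype.sum_bijective (fun a : ZMod p => a⁻¹) (inv_involutive.bijective) _ _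
        (fun a => rfl)
    have h4 : ∑ a : ZMod p, a ^ (k * j) = 0 := by
      apply FiniteField.sum_pow_lt_card_sub_one
      have : k * j ≤ k * r := Nat.mul_le_mul_left k hj
      rw [ZMod.card]
      omega
    rw [h1, h2, h3, h4]
  -- Newton's identity gives vanishing of esymm
  have hnewton := congrArg (eval x) (MvPolynomial.mul_esymm_eq_sum (Fin p) (ZMod p) r)
  simp only [map_mul, map_natCast, map_sum, map_pow, map_neg, map_one] at hnewton
  have hzero : ∀ a ∈ (antidiagonal r).filter (fun a : ℕ × ℕ => a.1 < r),
      ((-1 : ZMod p)) ^ a.1 * eval x (esymm (Fin p) (ZMod p) a.1)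
        * eval x (psum (Fin p) (ZMod p) a.2) = 0 := by
    intro a ha
    simp only [mem_filter, Finset.HasAntidiagonal.mem_antidiagonal] at ha
    rw [hpsum a.2 (by omega), mul_zero]
  rw [Finset.sum_eq_zero hzero, mul_zero] at hnewton
  have hr0 : (r : ZMod p) ≠ 0 := by
    rw [Ne, ZMod.natCast_eq_zero_iff]
    exact fun h => absurd (Nat.le_of_dvd (by omega) h) (by omega)
  have hE : eval x (esymm (Fin p) (ZMod p) r) = 0 :=
    (mul_eq_zero.mp hnewton).resolve_left hr0
  -- esymm evaluates to the sum over subsets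
  have hesymm : eval x (esymm (Fin p) (ZMod p) r)
      = ∑ A ∈ powersetCard r (univ : Finset (Fin p)), ∏ i ∈ A, x i := by
    simp [esymm, eval_prod]
  -- restrict to subsets not containing 0
  have hfilter : ∑ A ∈ powersetCard r (univ : Finset (Fin p)), ∏ i ∈ A, x i
      = ∑ A ∈ (powersetCard r (univ : Finset (Fin p))).filter
          (fun A => ∀ i ∈ A, 1 ≤ Fin.val i), ∏ i ∈ A, x i := by
    refine (Finset.sum_subset (filter_subset _ _) ?_).symm
    intro A hA hA'
    simp only [mem_filter, hA, true_and, not_forall] at hA'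
    obtain ⟨i, hi, hi'⟩ := hA'
    refine Finset.prod_eq_zero hi ?_
    have h0 : (i : ℕ) = 0 := by omega
    simp [hxdef, h0, zero_pow (by omega : k ≠ 0)]
  -- biject tuples with subsets
  have hbijsum : (∑ m ∈ Finset.univ.filter
        (fun m : Fin r → Fin p =>
          (∀ s t : Fin r, s < t → (m t : ℕ) < (m s : ℕ)) ∧ ∀ s, 1 ≤ (m s : ℕ)),
      ∏ s, (((m s : ℕ) : ZMod p))⁻¹ ^ k)
      = ∑ A ∈ (powersetCard r (univ : Finset (Fin p))).filter
          (fun A => ∀ i ∈ A, 1 ≤ Fin.val i), ∏ i ∈ A, x i := by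
    refine Finset.sum_bij (fun m _ => Finset.image m Finset.univ) ?_ ?_ ?_ ?_
    · intro m hm
      simp only [mem_filter, mem_univ, true_and] at hm ⊢
      have hanti : StrictAnti m := fun s t hst => hm.1 s t hst
      refine ⟨?_, ?_⟩
      · rw [mem_powersetCard_univ, Finset.card_image_of_injective _ hanti.injective,
          Finset.card_univ, Fintype.card_fin]
      · intro i hi
        simp only [Finset.mem_image, mem_univ, true_and] at hi
        obtain ⟨s, rfl⟩ := hi
        exact hm.2 s
    · intro m hm m' hm' himg
      simp only [mem_filter, mem_univ, true_and] at hm hm'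
      have himg' : Finset.image m Finset.univ = Finset.image m' Finset.univ := himg
      have hanti : StrictAnti m := fun s t hst => hm.1 s t hst
      have hanti' : StrictAnti m' := fun s t hst => hm'.1 s t hst
      have hcard : (Finset.image m Finset.univ).card = r := by
        rw [Finset.card_image_of_injective _ hanti.injective, Finset.card_univ,
          Fintype.card_fin]
      have hmono : StrictMono (m ∘ Fin.rev) := fun s t hst =>
        hanti (Fin.rev_lt_rev.mpr hst)
      have hmono' : StrictMono (m' ∘ Fin.rev) := fun s t hst =>
        hanti' (Fin.rev_lt_rev.mpr hst)
      have h1 : m ∘ Fin.rev = (Finset.image m Finset.univ).orderEmbOfFin hcard :=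
        Finset.orderEmbOfFin_unique hcard
          (fun s => Finset.mem_image_of_mem m (mem_univ _)) hmono
      have h2 : m' ∘ Fin.rev = (Finset.image m Finset.univ).orderEmbOfFin hcard :=
        Finset.orderEmbOfFin_unique hcard
          (fun s => himg' ▸ Finset.mem_image_of_mem m' (mem_univ _)) hmono'
      have heq : m ∘ Fin.rev = m' ∘ Fin.rev := h1.trans h2.symm
      funext s
      have := congrFun heq s.rev
      simpa [Fin.rev_rev] using this
    · intro A hA
      simp only [mem_filter, mem_powersetCard_univ] at hA
      obtain ⟨hcard, hge⟩ := hA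
      refine ⟨fun s => A.orderEmbOfFin hcard s.rev, ?_, ?_⟩
      · simp only [mem_filter, mem_univ, true_and]
        constructor
        · intro s t hst
          exact (A.orderEmbOfFin hcard).strictMono (Fin.rev_lt_rev.mpr hst)
        · intro s
          exact hge _ (Finset.orderEmbOfFin_mem A hcard s.rev)
      · ext a
        simp only [Finset.mem_image, mem_univ, true_and]
        constructor
        · rintro ⟨s, rfl⟩
          exact Finset.orderEmbOfFin_mem A hcard s.rev
        · intro ha
          have hmem : a ∈ Set.range (A.orderEmbOfFin hcard) := by
            rw [Finset.range_orderEmbOfFin]; exact ha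
          obtain ⟨t, ht⟩ := hmem
          exact ⟨t.rev, by rw [Fin.rev_rev]; exact ht⟩
    · intro m hm
      simp only [mem_filter, mem_univ, true_and] at hm
      have hanti : StrictAnti m := fun s t hst => hm.1 s t hst
      rw [Finset.prod_image (fun s _ t _ h => hanti.injective h)]
  rw [hbijsum, ← hfilter, ← hesymm, hE]
end
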